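/- The hyperfield homomorphism η: TC → T, η(z) = log(|z|), is relatively algebraically closed: for every univariate polynomial p over TC and every root b of the push-forward polynomial η_*(p) over T, there exists a ∈ TC with η(a) = b and a a root of p. -/

import Mathlib

open Set
open scoped Classical

/-- The axioms of a (Krasner) hyperfield on a carrier `H`, for a multivalued
addition `add`, multiplication `mul`, additive inverse `neg`, and constants. -/
structure IsHyperfield {H : Type*} (add : H → H → Set H) (mul : H → H → H)
    (neg : H → H) (zero one : H) : Prop where
  add_nonempty : ∀ x y, (add x y).Nonempty
  hadd_comm : ∀ x y, add x y = add y x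
  hadd_assoc : ∀ x y z, (⋃ w ∈ add x y, add w z) = ⋃ w ∈ add y z, add x w
  zero_hadd : ∀ x, add zero x = {x}
  hneg_add : ∀ x, zero ∈ add x (neg x)
  hneg_unique : ∀ x y, zero ∈ add x y → y = neg x
  reversible : ∀ x y z, x ∈ add y z → z ∈ add x (neg y)
  hmul_comm : ∀ x y, mul x y = mul y x
  hmul_assoc : ∀ x y z, mul (mul x y) z = mul x (mul y z)
  one_hmul : ∀ x, mul one x = x
  zero_hmul : ∀ x, mul zero x = zero
  hdistrib : ∀ a x y, (mul a) '' (add x y) = add (mul a x) (mul a y)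
  zero_ne_one : zero ≠ one
  exists_inv : ∀ x, x ≠ zero → ∃ y, mul x y = one

/-- Multivalued hypersum of a list of elements. -/
def hsum {H : Type*} (add : H → H → Set H) (zero : H) : List H → Set H
  | [] => {zero}
  | a :: l => ⋃ b ∈ hsum add zero l, add a b

/-- Powers with respect to a monoid multiplication. -/
def hpow {H : Type*} (mul : H → H → H) (one : H) (a : H) : ℕ → H
  | 0 => one
  | n + 1 => mul a (hpow mul one a n)

/-- Multivalued evaluation of the univariate polynomial `⊞_{i=0}^n c_i ⊙ X^i` at `a`. -/
def evalPoly {H : Type*} (add : H → H → Set H) (mul : H → H → H) (zero one : H)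
    (n : ℕ) (c : ℕ → H) (a : H) : Set H :=
  hsum add zero ((List.range (n + 1)).map fun i => mul (c i) (hpow mul one a i))

/-- Multivalued evaluation of a multivariate polynomial given by a list of
terms (coefficient, exponent vector) at a point `x`. -/
def evalMPoly {H : Type*} (add : H → H → Set H) (mul : H → H → H) (zero one : H)
    {n : ℕ} (terms : List (H × (Fin n → ℕ))) (x : Fin n → H) : Set H :=
  hsum add zero (terms.map fun t =>
    mul t.1 ((List.ofFn fun j => hpow mul one (x j) (t.2 j)).foldr mul one))

/-- Hyperfield homomorphism axioms. -/
structure IsHyperfieldHom {H1 H2 : Type*}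
    (add1 : H1 → H1 → Set H1) (mul1 : H1 → H1 → H1) (zero1 one1 : H1)
    (add2 : H2 → H2 → Set H2) (mul2 : H2 → H2 → H2) (zero2 one2 : H2)
    (f : H1 → H2) : Prop where
  map_zero : f zero1 = zero2
  map_one : f one1 = one2
  map_mul : ∀ x y, f (mul1 x y) = mul2 (f x) (f y)
  map_add : ∀ x y, f '' (add1 x y) ⊆ add2 (f x) (f y)

/-- `f` is relatively algebraically closed: every root of the coefficientwise
push-forward of a univariate polynomial lifts through `f` to a root. -/
def IsRAC {H1 H2 : Type*}
    (add1 : H1 → H1 → Set H1) (mul1 : H1 → H1 → H1) (zero1 one1 : H1)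
    (add2 : H2 → H2 → Set H2) (mul2 : H2 → H2 → H2) (zero2 one2 : H2)
    (f : H1 → H2) : Prop :=
  ∀ (n : ℕ) (c : ℕ → H1) (b : H2),
    zero2 ∈ evalPoly add2 mul2 zero2 one2 n (fun i => f (c i)) b →
    ∃ a : H1, f a = b ∧ zero1 ∈ evalPoly add1 mul1 zero1 one1 n c a

/-- Tropical hyperaddition on `ℝ ∪ {-∞}`. -/
noncomputable def Tadd (x y : WithBot ℝ) : Set (WithBot ℝ) :=
  if x = y then {z | z ≤ x} else {max x y}

/-- Tropical multiplication: addition of extended reals. -/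
noncomputable def Tmul (x y : WithBot ℝ) : WithBot ℝ := x + y

/-- Hyperaddition of the tropical complex hyperfield `TC` on `ℂ`. -/
noncomputable def TCadd (z w : ℂ) : Set ℂ :=
  if w = -z then {c | ‖c‖ ≤ ‖z‖}
  else if ‖w‖ < ‖z‖ then {z}
  else if ‖z‖ < ‖w‖ then {w}
  else {c | ∃ t : ℝ, 0 ≤ t ∧ t ≤ 1 ∧
    c = ((‖z‖ / ‖(t : ℂ) * z + (1 - (t : ℂ)) * w‖ : ℝ) : ℂ) *
      ((t : ℂ) * z + (1 - (t : ℂ)) * w)}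

/-- The homomorphism `η(z) = log |z|` from `TC` to the tropical hyperfield. -/
noncomputable def eta (z : ℂ) : WithBot ℝ :=
  if z = 0 then ⊥ else ((Real.log (‖z‖) : ℝ) : WithBot ℝ)

/-- Hyperaddition of the hyperfield of signs. -/
noncomputable def Sadd (x y : SignType) : Set SignType :=
  if x = 0 then {y} else if y = 0 then {x} else if x = y then {x} else Set.univ

/-- Hyperaddition of the Krasner hyperfield on `Bool` (`false = 0`, `true = 1`). -/
def Kadd (x y : Bool) : Set Bool :=
  if x = false then {y} else if y = false then {x} else Set.univ

/-- `c ∈ (X ⊞ -a) ⊙ d` : the coefficients `c` arise from multiplying the linear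
factor `X ⊞ (-a)` with the polynomial with coefficients `d`. -/
def LinFactor {H : Type*} (add : H → H → Set H) (mul : H → H → H) (zero : H)
    (neg : H → H) (a : H) (c d : ℕ → H) : Prop :=
  ∀ i, c i ∈ add (if i = 0 then zero else d (i - 1)) (mul (neg a) (d i))

/-- `MultGe … a n c k` : the multiplicity of `a` as a root of the degree-`n`
polynomial with coefficients `c` is at least `k` (recursive peeling of linear factors). -/
def MultGe {H : Type*} (add : H → H → Set H) (mul : H → H → H) (zero one : H)
    (neg : H → H) (a : H) : ℕ → (ℕ → H) → ℕ → Prop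
  | _, _, 0 => True
  | n, c, k + 1 => zero ∈ evalPoly add mul zero one n c a ∧
      ∃ d : ℕ → H, (∀ i, n ≤ i → d i = zero) ∧ LinFactor add mul zero neg a c d ∧
        MultGe add mul zero one neg a (n - 1) d k

/-- The multiplicity of `a` as a root. -/
noncomputable def hmult {H : Type*} (add : H → H → Set H) (mul : H → H → H)
    (zero one : H) (neg : H → H) (n : ℕ) (c : ℕ → H) (a : H) : ℕ :=
  sSup {k | MultGe add mul zero one neg a n c k}

/-- The multiplicity bound: the sum of root multiplicities is at most the degree. -/
def MultBound {H : Type*} (add : H → H → Set H) (mul : H → H → H)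
    (zero one : H) (neg : H → H) : Prop :=
  ∀ (n : ℕ) (c : ℕ → H), c n ≠ zero →
    ∀ S : Finset H, (S.sum fun a => hmult add mul zero one neg n c a) ≤ n

/-- The multiplicity equality: the sum of root multiplicities equals the degree. -/
def MultEq {H : Type*} (add : H → H → Set H) (mul : H → H → H)
    (zero one : H) (neg : H → H) : Prop :=
  MultBound add mul zero one neg ∧
    ∀ (n : ℕ) (c : ℕ → H), c n ≠ zero →
      ∃ S : Finset H, (S.sum fun a => hmult add mul zero one neg n c a) = n

/-- Iterated splitting off of a list of linear factors: `c ∈ (X ⊞ -a₁) ⊙ ⋯ ⊙ (X ⊞ -aₘ) ⊙ d`. -/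
def MultiLinFactor {H : Type*} (add : H → H → Set H) (mul : H → H → H) (zero : H)
    (neg : H → H) : List H → (ℕ → H) → (ℕ → H) → Prop
  | [], c, d => c = d
  | a :: l, c, d => ∃ e : ℕ → H, LinFactor add mul zero neg a c e ∧
      MultiLinFactor add mul zero neg l e d

/-- The inheritance property: any sub-multiset of the multiset of roots (with
multiplicity) of size at most the degree can be split off as linear factors. -/
def Inheritance {H : Type*} (add : H → H → Set H) (mul : H → H → H)
    (zero one : H) (neg : H → H) : Prop :=
  ∀ (n : ℕ) (c : ℕ → H), c n ≠ zero →
    ∀ l : List H, l.length ≤ n →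
      (∀ a : H, (l.filter fun x => x = a).length ≤ hmult add mul zero one neg n c a) →
      ∃ q : ℕ → H, MultiLinFactor add mul zero neg l c q

section EtaRACHelpers

/-! ### Basic facts about `TCadd` -/

lemma TCadd_neg (z : ℂ) : TCadd z (-z) = {c | ‖c‖ ≤ ‖z‖} := by
  unfold TCadd; rw [if_pos rfl]

lemma mem_TCadd_arc {z w : ℂ} (h1 : ¬ w = -z) (h2 : ¬ ‖w‖ < ‖z‖)
    (h3 : ¬ ‖z‖ < ‖w‖) {c : ℂ} (t : ℝ) (ht0 : 0 ≤ t) (ht1 : t ≤ 1)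
    (hc : c = ((‖z‖ / ‖(t : ℂ) * z + (1 - (t : ℂ)) * w‖ : ℝ) : ℂ) *
      ((t : ℂ) * z + (1 - (t : ℂ)) * w)) : c ∈ TCadd z w := by
  unfold TCadd
  rw [if_neg h1, if_neg h2, if_neg h3]
  exact ⟨t, ht0, ht1, hc⟩

lemma TCadd_abs_eq {z w : ℂ} (h2 : ¬ ‖w‖ < ‖z‖)
    (h3 : ¬ ‖z‖ < ‖w‖) : ‖z‖ = ‖w‖ :=
  le_antisymm (not_lt.mp h2) (not_lt.mp h3)

lemma TCadd_ne_zero {z w : ℂ} (h1 : ¬ w = -z) (h2 : ¬ ‖w‖ < ‖z‖)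
    (h3 : ¬ ‖z‖ < ‖w‖) : z ≠ 0 := by
  intro hz
  have hw : w = 0 := by
    have h4 : ‖w‖ = 0 := by rw [← TCadd_abs_eq h2 h3, hz, norm_zero]
    exact norm_eq_zero.1 h4
  exact h1 (by rw [hw, hz, neg_zero])

lemma left_mem_TCadd {z w : ℂ} (h : ‖w‖ ≤ ‖z‖) : z ∈ TCadd z w := by
  unfold TCadd
  split_ifs with h1 h2 h3
  · exact le_refl (‖z‖)
  · exact rfl
  · exact absurd (h.trans_lt h3) (lt_irrefl _)
  · have hz : z ≠ 0 := TCadd_ne_zero h1 h2 h3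
    refine ⟨1, zero_le_one, le_refl 1, ?_⟩
    have hp : ((1:ℝ) : ℂ) * z + (1 - ((1:ℝ) : ℂ)) * w = z := by push_cast; ring
    rw [hp, div_self (norm_ne_zero_iff.2 hz)]
    push_cast; ring

lemma right_mem_TCadd {z w : ℂ} (h : ‖z‖ ≤ ‖w‖) : w ∈ TCadd z w := by
  unfold TCadd
  split_ifs with h1 h2 h3
  · rw [h1]; exact le_of_eq (norm_neg z)
  · exact absurd (h.trans_lt h2) (lt_irrefl _)
  · exact rfl
  · have hz : z ≠ 0 := TCadd_ne_zero h1 h2 h3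
    have heq : ‖z‖ = ‖w‖ := TCadd_abs_eq h2 h3
    have hw : w ≠ 0 := by
      intro hw0
      exact hz (by rwa [hw0, norm_zero, norm_eq_zero] at heq)
    refine ⟨0, le_refl 0, zero_le_one, ?_⟩
    have hp : ((0:ℝ) : ℂ) * z + (1 - ((0:ℝ) : ℂ)) * w = w := by push_cast; ring
    rw [hp, heq, div_self (norm_ne_zero_iff.2 hw)]
    push_cast; ring

lemma TCadd_abs_le {z w c : ℂ} (h : c ∈ TCadd z w) :
    ‖c‖ ≤ max (‖z‖) (‖w‖) := by
  unfold TCadd at h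
  split_ifs at h with h1 h2 h3
  · exact le_trans h (le_max_left _ _)
  · rw [Set.mem_singleton_iff] at h; subst h; exact le_max_left _ _
  · rw [Set.mem_singleton_iff] at h; subst h; exact le_max_right _ _
  · obtain ⟨t, _, _, rfl⟩ := h
    set p := (t : ℂ) * z + (1 - (t : ℂ)) * w with hp
    rcases eq_or_ne p 0 with h0 | h0
    · simp [h0]
    · rw [norm_mul, Complex.norm_real, Real.norm_eq_abs,
        _root_.abs_of_nonneg (div_nonneg (norm_nonneg z) (norm_nonneg p)),
        div_mul_cancel₀ _ (norm_ne_zero_iff.2 h0)]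
      exact le_max_left _ _

lemma mem_hsum_cons {H : Type*} {add : H → H → Set H} {zero : H} {a : H} {l : List H} {c : H} :
    c ∈ hsum add zero (a :: l) ↔ ∃ w ∈ hsum add zero l, c ∈ add a w := by
  simp [hsum]

/-! ### Facts about `hsum` over `TCadd` -/

lemma hsum_TC_abs_le {M : ℝ} (hM : 0 ≤ M) :
    ∀ L : List ℂ, (∀ z ∈ L, ‖z‖ ≤ M) →
      ∀ c ∈ hsum TCadd 0 L, ‖c‖ ≤ M := by
  intro L
  induction L with
  | nil =>
    intro _ c hc
    rw [hsum, Set.mem_singleton_iff] at hc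
    simpa [hc]
  | cons a l ih =>
    intro hL c hc
    rw [mem_hsum_cons] at hc
    obtain ⟨w, hw, hcw⟩ := hc
    have h1 := TCadd_abs_le hcw
    have h2 : ‖a‖ ≤ M := hL a (List.mem_cons_self)
    have h3 : ‖w‖ ≤ M := ih (fun z hz => hL z (List.mem_cons_of_mem a hz)) w hw
    exact h1.trans (max_le h2 h3)

lemma hsum_TC_nonempty : ∀ L : List ℂ, (hsum TCadd 0 L).Nonempty := by
  intro L
  induction L with
  | nil => exact ⟨0, rfl⟩
  | cons a l ih =>
    obtain ⟨w, hw⟩ := ih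
    rcases le_total (‖w‖) (‖a‖) with h | h
    · exact ⟨a, mem_hsum_cons.2 ⟨w, hw, left_mem_TCadd h⟩⟩
    · exact ⟨w, mem_hsum_cons.2 ⟨w, hw, right_mem_TCadd h⟩⟩

lemma hsum_TC_zeros : ∀ L : List ℂ, (∀ z ∈ L, z = 0) → (0 : ℂ) ∈ hsum TCadd 0 L := by
  intro L
  induction L with
  | nil => intro _; exact rfl
  | cons a l ih =>
    intro hL
    refine mem_hsum_cons.2 ⟨0, ih (fun z hz => hL z (List.mem_cons_of_mem a hz)), ?_⟩
    rw [hL a (List.mem_cons_self)]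
    have h00 := TCadd_neg (0 : ℂ)
    rw [neg_zero] at h00
    rw [h00]
    simp

lemma TC_mem_hsum : ∀ (m : ℕ) (T : ℕ → ℂ) (k : ℕ), k < m →
    (∀ i, i < m → ‖T i‖ ≤ ‖T k‖) →
    T k ∈ hsum TCadd 0 ((List.range m).map T) := by
  intro m
  induction m with
  | zero => intro T k hk; exact absurd hk (Nat.not_lt_zero k)
  | succ m ih =>
    intro T k hk hbound
    rw [List.range_succ_eq_map, List.map_cons, List.map_map]
    have htail : ∀ z ∈ (List.range m).map (T ∘ Nat.succ), ‖z‖ ≤ ‖T k‖ := by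
      intro z hz
      obtain ⟨i, hi, rfl⟩ := List.mem_map.1 hz
      exact hbound (i + 1) (Nat.succ_lt_succ (List.mem_range.1 hi))
    cases k with
    | zero =>
      obtain ⟨w, hw⟩ := hsum_TC_nonempty ((List.range m).map (T ∘ Nat.succ))
      have hwle : ‖w‖ ≤ ‖T 0‖ :=
        hsum_TC_abs_le (norm_nonneg _) _ htail w hw
      exact mem_hsum_cons.2 ⟨w, hw, left_mem_TCadd hwle⟩
    | succ k' =>
      have hmem : T (k' + 1) ∈ hsum TCadd 0 ((List.range m).map (T ∘ Nat.succ)) :=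
        ih (T ∘ Nat.succ) k' (Nat.lt_of_succ_lt_succ hk)
          (fun i hi => hbound (i + 1) (Nat.succ_lt_succ hi))
      refine mem_hsum_cons.2 ⟨T (k' + 1), hmem, ?_⟩
      exact right_mem_TCadd (hbound 0 (Nat.succ_pos m))

lemma TC_disc_subset : ∀ (m : ℕ) (T : ℕ → ℂ) (j k : ℕ), j < k → k < m → T j = -T k →
    (∀ i, i < m → ‖T i‖ ≤ ‖T k‖) →
    ∀ c : ℂ, ‖c‖ ≤ ‖T k‖ →
      c ∈ hsum TCadd 0 ((List.range m).map T) := by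
  intro m
  induction m with
  | zero => intro T j k _ hk; exact absurd hk (Nat.not_lt_zero k)
  | succ m ih =>
    intro T j k hjk hkm hanti hbound c hc
    rw [List.range_succ_eq_map, List.map_cons, List.map_map]
    obtain ⟨k', rfl⟩ : ∃ k', k = k' + 1 :=
      ⟨k - 1, (Nat.succ_pred_eq_of_pos (Nat.lt_of_le_of_lt (Nat.zero_le j) hjk)).symm⟩
    cases j with
    | zero =>
      -- T 0 = - T k ; hsum tail contains T k, and TCadd (T 0) (T k) is the full disc.
      have hmem : T (k' + 1) ∈ hsum TCadd 0 ((List.range m).map (T ∘ Nat.succ)) :=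
        TC_mem_hsum m (T ∘ Nat.succ) k' (Nat.lt_of_succ_lt_succ hkm)
          (fun i hi => hbound (i + 1) (Nat.succ_lt_succ hi))
      refine mem_hsum_cons.2 ⟨T (k' + 1), hmem, ?_⟩
      have h2 : T (k' + 1) = -(T 0) := by rw [hanti, neg_neg]
      rw [h2, TCadd_neg]
      have habs0 : ‖T 0‖ = ‖T (k' + 1)‖ := by
        rw [hanti]; exact norm_neg _
      rw [habs0]; exact hc
    | succ j' =>
      have ihall : ∀ c' : ℂ, ‖c'‖ ≤ ‖T (k' + 1)‖ →
          c' ∈ hsum TCadd 0 ((List.range m).map (T ∘ Nat.succ)) :=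
        ih (T ∘ Nat.succ) j' k' (Nat.lt_of_succ_lt_succ hjk) (Nat.lt_of_succ_lt_succ hkm)
          hanti (fun i hi => hbound (i + 1) (Nat.succ_lt_succ hi))
      rcases le_or_gt (‖c‖) (‖T 0‖) with hle | hlt
      · have hmem : -(T 0) ∈ hsum TCadd 0 ((List.range m).map (T ∘ Nat.succ)) := by
          apply ihall
          rw [norm_neg]
          exact hbound 0 (Nat.succ_pos m)
        refine mem_hsum_cons.2 ⟨-(T 0), hmem, ?_⟩
        rw [TCadd_neg]; exact hle
      · have hmem : c ∈ hsum TCadd 0 ((List.range m).map (T ∘ Nat.succ)) := ihall c hc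
        refine mem_hsum_cons.2 ⟨c, hmem, ?_⟩
        unfold TCadd
        have h1 : ¬ c = -(T 0) := by
          intro h; rw [h, norm_neg] at hlt; exact lt_irrefl _ hlt
        rw [if_neg h1, if_neg (not_lt.2 hlt.le), if_pos hlt]
        exact rfl

/-! ### Facts about `Tadd` and `hsum` over it -/

lemma bot_mem_Tadd {a w : WithBot ℝ} : ⊥ ∈ Tadd a w ↔ w = a := by
  unfold Tadd
  split_ifs with h
  · simp [h]
  · simp only [Set.mem_singleton_iff, eq_comm (a := (⊥ : WithBot ℝ)), max_eq_bot]
    constructor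
    · rintro ⟨rfl, rfl⟩; rfl
    · intro hwa; exact absurd hwa.symm h

lemma T_mem_hsum_cases : ∀ (m : ℕ) (t : ℕ → WithBot ℝ) (v : WithBot ℝ),
    v ∈ hsum Tadd ⊥ ((List.range m).map t) →
    (m = 0 ∧ v = ⊥) ∨
    (∃ j, j < m ∧ t j = v ∧ ∀ i, i < m → t i ≤ v) ∨
    (∃ j k, j < k ∧ k < m ∧ t j = t k ∧ t j ≠ ⊥ ∧ v ≤ t j ∧ ∀ i, i < m → t i ≤ t j) := by
  intro m
  induction m with
  | zero =>
    intro t v hv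
    rw [List.range_zero, List.map_nil, hsum, Set.mem_singleton_iff] at hv
    exact Or.inl ⟨rfl, hv⟩
  | succ m ih =>
    intro t v hv
    rw [List.range_succ_eq_map, List.map_cons, List.map_map] at hv
    obtain ⟨w, hw, hvw⟩ := mem_hsum_cons.1 hv
    have hvm : t 0 = w → v ≤ t 0 := by
      intro h; unfold Tadd at hvw; rw [if_pos h] at hvw; exact hvw
    have hvmax : t 0 ≠ w → v = max (t 0) w := by
      intro h; unfold Tadd at hvw; rw [if_neg h] at hvw; exact hvw
    rcases ih (t ∘ Nat.succ) w hw with ⟨hm0, rfl⟩ | ⟨j, hj, hjw, hbd⟩ |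
      ⟨j, k, hjk, hkm, heq, hne, hwle, hbd⟩
    · -- tail empty, w = ⊥
      subst hm0
      by_cases h0 : t 0 = ⊥
      · have hvb : v = ⊥ := le_bot_iff.1 (h0 ▸ hvm h0)
        refine Or.inr (Or.inl ⟨0, Nat.succ_pos 0, by rw [h0, hvb], ?_⟩)
        intro i hi
        interval_cases i
        rw [h0, hvb]
      · have hvv : v = max (t 0) ⊥ := hvmax h0
        rw [max_bot_right] at hvv
        refine Or.inr (Or.inl ⟨0, Nat.succ_pos 0, hvv.symm, ?_⟩)
        intro i hi
        interval_cases i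
        exact le_of_eq hvv.symm
    · -- tail has a max at position j (value w)
      have hjw' : t (j + 1) = w := hjw
      have hbd' : ∀ i, i < m → t (i + 1) ≤ w := hbd
      by_cases h0 : t 0 = w
      · have hv0 : v ≤ t 0 := hvm h0
        by_cases hwbot : w = ⊥
        · have h0b : t 0 = ⊥ := by rw [h0, hwbot]
          have hvb : v = ⊥ := le_bot_iff.1 (h0b ▸ hv0)
          refine Or.inr (Or.inl ⟨0, Nat.succ_pos m, by rw [h0b, hvb], ?_⟩)
          intro i hi
          cases i with
          | zero => rw [h0b, hvb]
          | succ i' =>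
            rw [hvb, ← hwbot]
            exact hbd' i' (Nat.lt_of_succ_lt_succ hi)
        · refine Or.inr (Or.inr ⟨0, j + 1, Nat.succ_pos j, Nat.succ_lt_succ hj, ?_, ?_, hv0, ?_⟩)
          · rw [h0, hjw']
          · rw [h0]; exact hwbot
          · intro i hi
            cases i with
            | zero => exact le_refl _
            | succ i' =>
              rw [h0]
              exact hbd' i' (Nat.lt_of_succ_lt_succ hi)
      · have hvv : v = max (t 0) w := hvmax h0
        rcases lt_or_gt_of_ne h0 with hlt | hgt
        · -- t 0 < w : max is w, at position j+1
          refine Or.inr (Or.inl ⟨j + 1, Nat.succ_lt_succ hj, ?_, ?_⟩)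
          · rw [hvv, max_eq_right hlt.le, hjw']
          · intro i hi
            rw [hvv, max_eq_right hlt.le]
            cases i with
            | zero => exact hlt.le
            | succ i' => exact hbd' i' (Nat.lt_of_succ_lt_succ hi)
        · -- w < t 0 : max is t 0 at position 0
          refine Or.inr (Or.inl ⟨0, Nat.succ_pos m, ?_, ?_⟩)
          · rw [hvv, max_eq_left hgt.le]
          · intro i hi
            rw [hvv, max_eq_left hgt.le]
            cases i with
            | zero => exact le_refl _
            | succ i' => exact (hbd' i' (Nat.lt_of_succ_lt_succ hi)).trans hgt.le
    · -- tail has two maxima at positions j, k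
      have heq' : t (j + 1) = t (k + 1) := heq
      have hne' : t (j + 1) ≠ ⊥ := hne
      have hwle' : w ≤ t (j + 1) := hwle
      have hbd' : ∀ i, i < m → t (i + 1) ≤ t (j + 1) := hbd
      by_cases h0 : t 0 = w
      · refine Or.inr (Or.inr ⟨j + 1, k + 1, Nat.succ_lt_succ hjk, Nat.succ_lt_succ hkm,
          heq', hne', (hvm h0).trans ((le_of_eq h0).trans hwle'), ?_⟩)
        intro i hi
        cases i with
        | zero => exact (le_of_eq h0).trans hwle'
        | succ i' => exact hbd' i' (Nat.lt_of_succ_lt_succ hi)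
      · have hvv : v = max (t 0) w := hvmax h0
        rcases le_or_gt (t 0) (t (j + 1)) with hle | hgt
        · refine Or.inr (Or.inr ⟨j + 1, k + 1, Nat.succ_lt_succ hjk, Nat.succ_lt_succ hkm,
            heq', hne', ?_, ?_⟩)
          · rw [hvv]; exact max_le hle hwle'
          · intro i hi
            cases i with
            | zero => exact hle
            | succ i' => exact hbd' i' (Nat.lt_of_succ_lt_succ hi)
        · -- t (j+1) < t 0, so w ≤ t(j+1) < t 0 and max is t 0
          refine Or.inr (Or.inl ⟨0, Nat.succ_pos m, ?_, ?_⟩)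
          · rw [hvv, max_eq_left (hwle'.trans hgt.le)]
          · intro i hi
            rw [hvv, max_eq_left (hwle'.trans hgt.le)]
            cases i with
            | zero => exact le_refl _
            | succ i' => exact (hbd' i' (Nat.lt_of_succ_lt_succ hi)).trans hgt.le

lemma T_bot_hsum (m : ℕ) (t : ℕ → WithBot ℝ)
    (h : ⊥ ∈ hsum Tadd ⊥ ((List.range (m + 1)).map t)) :
    (∀ i, i < m + 1 → t i = ⊥) ∨
    ∃ j k, j < k ∧ k < m + 1 ∧ t j = t k ∧ t j ≠ ⊥ ∧ ∀ i, i < m + 1 → t i ≤ t j := by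
  rw [List.range_succ_eq_map, List.map_cons, List.map_map] at h
  obtain ⟨w, hw, hbw⟩ := mem_hsum_cons.1 h
  have hw0 : w = t 0 := bot_mem_Tadd.1 hbw
  subst hw0
  rcases T_mem_hsum_cases m (t ∘ Nat.succ) (t 0) hw with ⟨hm0, h0⟩ | ⟨j, hj, hjw, hbd⟩ | ⟨j, k, hjk, hkm, heq, hne, hwle, hbd⟩
  · left
    intro i hi
    subst hm0
    interval_cases i
    · exact h0
  · by_cases h0 : t 0 = ⊥
    · left
      intro i hi
      cases i with
      | zero => exact h0
      | succ i' => exact le_bot_iff.1 (h0 ▸ hbd i' (Nat.lt_of_succ_lt_succ hi))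
    · right
      refine ⟨0, j + 1, Nat.succ_pos j, Nat.succ_lt_succ hj, hjw.symm, h0, ?_⟩
      intro i hi
      cases i with
      | zero => exact le_refl _
      | succ i' => exact hbd i' (Nat.lt_of_succ_lt_succ hi)
  · right
    refine ⟨j + 1, k + 1, Nat.succ_lt_succ hjk, Nat.succ_lt_succ hkm, heq, hne, ?_⟩
    intro i hi
    cases i with
    | zero => exact hwle
    | succ i' => exact hbd i' (Nat.lt_of_succ_lt_succ hi)

/-! ### `hpow` computations -/

lemma hpow_eq_pow (a : ℂ) : ∀ i : ℕ, hpow (· * ·) (1 : ℂ) a i = a ^ i := by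
  intro i
  induction i with
  | zero => rfl
  | succ i ih => rw [hpow, ih, pow_succ']

lemma hpow_T_bot (i : ℕ) : hpow Tmul 0 (⊥ : WithBot ℝ) (i + 1) = ⊥ := by
  rw [hpow]
  show (⊥ : WithBot ℝ) + _ = ⊥
  exact WithBot.bot_add _

lemma hpow_T_coe (r : ℝ) : ∀ i : ℕ, hpow Tmul 0 ((r : ℝ) : WithBot ℝ) i = (((i : ℝ) * r : ℝ) : WithBot ℝ) := by
  intro i
  induction i with
  | zero => simp [hpow]
  | succ i ih =>
    rw [hpow, ih]
    show ((r : ℝ) : WithBot ℝ) + _ = _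
    rw [← WithBot.coe_add]
    congr 1
    push_cast
    ring

/-! ### `eta` computations -/

lemma eta_eq_bot_iff {z : ℂ} : eta z = ⊥ ↔ z = 0 := by
  unfold eta
  split_ifs with h
  · simp [h]
  · simp [h, WithBot.coe_ne_bot]

lemma eta_of_ne_zero {z : ℂ} (h : z ≠ 0) : eta z = ((Real.log (‖z‖) : ℝ) : WithBot ℝ) := by
  unfold eta; rw [if_neg h]

/-! ### Complex exponential helpers -/

lemma exp_add_pi (x : ℝ) :
    Complex.exp (((x + Real.pi : ℝ) : ℂ) * Complex.I) = -Complex.exp ((x : ℂ) * Complex.I) := by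
  push_cast
  rw [add_mul, Complex.exp_add, Complex.exp_pi_mul_I]
  ring

lemma exp_add_two_pi (x : ℝ) :
    Complex.exp (((x + 2 * Real.pi : ℝ) : ℂ) * Complex.I) = Complex.exp ((x : ℂ) * Complex.I) := by
  push_cast
  rw [add_mul, Complex.exp_add]
  rw [show ((2 : ℂ) * (Real.pi : ℂ)) * Complex.I = 2 * (Real.pi : ℂ) * Complex.I by ring,
    Complex.exp_two_pi_mul_I]
  ring

lemma polar_pow (z : ℂ) (R θ : ℝ) (i : ℕ) :
    z * ((R : ℂ) * Complex.exp ((θ : ℂ) * Complex.I)) ^ i =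
      ((‖z‖ * R ^ i : ℝ) : ℂ) *
        Complex.exp (((Complex.arg z + i * θ : ℝ) : ℂ) * Complex.I) := by
  conv_lhs => rw [← Complex.norm_mul_exp_arg_mul_I z]
  rw [mul_pow, ← Complex.exp_nat_mul]
  have h1 : ((i : ℂ)) * ((θ : ℂ) * Complex.I) = (((i : ℝ) * θ : ℝ) : ℂ) * Complex.I := by
    push_cast; ring
  rw [h1]
  have h2 : (((Complex.arg z + i * θ : ℝ)) : ℂ) * Complex.I =
      ((Complex.arg z : ℝ) : ℂ) * Complex.I + (((i : ℝ) * θ : ℝ) : ℂ) * Complex.I := by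
    push_cast; ring
  rw [h2, Complex.exp_add]
  push_cast
  ring

end EtaRACHelpers

/-- The hyperfield homomorphism `η : TC → T`, `η(z) = log |z|`, is
relatively algebraically closed. -/
theorem eta_isRAC :
    IsRAC TCadd (· * ·) (0 : ℂ) (1 : ℂ) Tadd Tmul ⊥ (0 : WithBot ℝ) eta := by
  intro n c b hb
  have hb' : ⊥ ∈ hsum Tadd ⊥ ((List.range (n + 1)).map
      fun i => Tmul (eta (c i)) (hpow Tmul 0 b i)) := hb
  rcases T_bot_hsum n (fun i => Tmul (eta (c i)) (hpow Tmul 0 b i)) hb' with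
    hall | ⟨j, k, hjk, hkn, hjkeq, hjne, hmax⟩
  · -- degenerate case: all tropical terms are ⊥
    by_cases hbb : b = ⊥
    · -- b = ⊥ : take a = 0
      refine ⟨0, by rw [hbb]; simp [eta], ?_⟩
      show (0 : ℂ) ∈ hsum TCadd 0 ((List.range (n + 1)).map
        fun i => (c i) * hpow (· * ·) 1 (0 : ℂ) i)
      apply hsum_TC_zeros
      intro z hz
      obtain ⟨i, hi, rfl⟩ := List.mem_map.1 hz
      rw [List.mem_range] at hi
      rw [hpow_eq_pow]
      cases i with
      | zero =>
        have h0 : Tmul (eta (c 0)) (hpow Tmul 0 b 0) = ⊥ := hall 0 (Nat.succ_pos n)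
        have he : eta (c 0) = ⊥ := by
          have h1 : eta (c 0) + (0 : WithBot ℝ) = ⊥ := h0
          rwa [add_zero] at h1
        rw [eta_eq_bot_iff.1 he]
        simp
      | succ i' => simp
    · -- b = r : all coefficients are 0
      obtain ⟨r, hr⟩ := WithBot.ne_bot_iff_exists.1 hbb
      refine ⟨((Real.exp r : ℝ) : ℂ), ?_, ?_⟩
      · rw [eta_of_ne_zero (Complex.ofReal_ne_zero.2 (Real.exp_ne_zero r))]
        rw [Complex.norm_real, Real.norm_eq_abs, abs_of_pos (Real.exp_pos r), Real.log_exp]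
        exact hr
      · show (0 : ℂ) ∈ hsum TCadd 0 ((List.range (n + 1)).map
          fun i => (c i) * hpow (· * ·) 1 ((Real.exp r : ℝ) : ℂ) i)
        apply hsum_TC_zeros
        intro z hz
        obtain ⟨i, hi, rfl⟩ := List.mem_map.1 hz
        rw [List.mem_range] at hi
        have hterm : Tmul (eta (c i)) (hpow Tmul 0 b i) = ⊥ := hall i hi
        have hib : hpow Tmul 0 b i ≠ ⊥ := by
          rw [← hr, hpow_T_coe]
          exact WithBot.coe_ne_bot
        have he : eta (c i) = ⊥ := by
          rcases WithBot.add_eq_bot.1 hterm with h | h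
          · exact h
          · exact absurd h hib
        rw [eta_eq_bot_iff.1 he, zero_mul]
  · -- main case: the maximum is attained twice, at j < k ≤ n
    -- first, b ≠ ⊥
    have hkpos : 0 < k := Nat.lt_of_le_of_lt (Nat.zero_le j) hjk
    have hbb : b ≠ ⊥ := by
      intro hb0
      apply hjne
      rw [hjkeq]
      obtain ⟨k', rfl⟩ : ∃ k', k = k' + 1 := ⟨k - 1, (Nat.succ_pred_eq_of_pos hkpos).symm⟩
      show Tmul (eta (c (k' + 1))) (hpow Tmul 0 b (k' + 1)) = ⊥
      rw [hb0, hpow_T_bot]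
      exact WithBot.add_bot _
    obtain ⟨r, hr⟩ := WithBot.ne_bot_iff_exists.1 hbb
    -- nonvanishing of the two extreme coefficients
    have hcj : c j ≠ 0 := by
      intro h0
      apply hjne
      show Tmul (eta (c j)) (hpow Tmul 0 b j) = ⊥
      rw [h0, eta_eq_bot_iff.2 rfl]
      exact WithBot.bot_add _
    have hck : c k ≠ 0 := by
      intro h0
      apply hjne
      rw [hjkeq]
      show Tmul (eta (c k)) (hpow Tmul 0 b k) = ⊥
      rw [h0, eta_eq_bot_iff.2 rfl]
      exact WithBot.bot_add _
    -- the tropical values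
    set μ : ℕ → ℝ := fun i => Real.log (‖c i‖) + i * r with hμ
    have hτcoe : ∀ i, c i ≠ 0 →
        Tmul (eta (c i)) (hpow Tmul 0 b i) = ((μ i : ℝ) : WithBot ℝ) := by
      intro i hi
      show eta (c i) + hpow Tmul 0 b i = _
      rw [eta_of_ne_zero hi, ← hr, hpow_T_coe, ← WithBot.coe_add]
    have hμjk : μ j = μ k := by
      have := hjkeq
      rw [hτcoe j hcj, hτcoe k hck] at this
      exact_mod_cast this
    -- choose the lift
    set θ : ℝ := (Real.pi + (c j).arg - (c k).arg) / ((k : ℝ) - (j : ℝ)) with hθ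
    have hkj : ((k : ℝ) - (j : ℝ)) ≠ 0 := by
      have : (j : ℝ) < (k : ℝ) := by exact_mod_cast hjk
      exact sub_ne_zero.2 (ne_of_gt this)
    set a : ℂ := ((Real.exp r : ℝ) : ℂ) * Complex.exp ((θ : ℂ) * Complex.I) with ha
    have ha0 : a ≠ 0 :=
      mul_ne_zero (Complex.ofReal_ne_zero.2 (Real.exp_ne_zero r)) (Complex.exp_ne_zero _)
    have habs : ‖a‖ = Real.exp r := by
      rw [ha, norm_mul, Complex.norm_real, Real.norm_eq_abs, abs_of_pos (Real.exp_pos r),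
        Complex.norm_exp_ofReal_mul_I, mul_one]
    have heta : eta a = b := by
      rw [eta_of_ne_zero ha0, habs, Real.log_exp, hr]
    -- the complex terms
    set T : ℕ → ℂ := fun i => c i * a ^ i with hT
    have habspow : ∀ i, c i ≠ 0 → ‖c i‖ * (Real.exp r) ^ i = Real.exp (μ i) := by
      intro i hi
      rw [hμ]
      rw [Real.exp_add, Real.exp_log (norm_pos_iff.2 hi), ← Real.exp_nat_mul]
    have habsT : ∀ i, c i ≠ 0 → ‖T i‖ = Real.exp (μ i) := by
      intro i hi
      rw [hT, norm_mul, norm_pow, habs, habspow i hi]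
    have hbound : ∀ i, i < n + 1 → ‖T i‖ ≤ ‖T k‖ := by
      intro i hi
      rw [habsT k hck]
      by_cases hci : c i = 0
      · rw [hT]
        simp only [hci, zero_mul, norm_zero]
        exact (Real.exp_pos _).le
      · rw [habsT i hci, Real.exp_le_exp, ← hμjk]
        have := hmax i hi
        rw [hτcoe i hci, hτcoe j hcj] at this
        exact_mod_cast this
    -- antipodality of the two extreme terms
    have hang : (c k).arg + (k : ℝ) * θ + Real.pi = ((c j).arg + (j : ℝ) * θ) + 2 * Real.pi := by
      have hkθ : ((k : ℝ) - (j : ℝ)) * θ = Real.pi + (c j).arg - (c k).arg := by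
        rw [hθ, mul_div_cancel₀ _ hkj]
      linear_combination hkθ
    have hexp : Complex.exp ((((c j).arg + (j : ℝ) * θ : ℝ) : ℂ) * Complex.I) =
        -Complex.exp ((((c k).arg + (k : ℝ) * θ : ℝ) : ℂ) * Complex.I) := by
      calc Complex.exp ((((c j).arg + (j : ℝ) * θ : ℝ) : ℂ) * Complex.I)
          = Complex.exp (((((c j).arg + (j : ℝ) * θ) + 2 * Real.pi : ℝ) : ℂ) * Complex.I) :=
            (exp_add_two_pi _).symm
        _ = Complex.exp (((((c k).arg + (k : ℝ) * θ) + Real.pi : ℝ) : ℂ) * Complex.I) := by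
            rw [show (((c k).arg + (k : ℝ) * θ) + Real.pi : ℝ) =
              (((c j).arg + (j : ℝ) * θ) + 2 * Real.pi) from hang]
        _ = -Complex.exp ((((c k).arg + (k : ℝ) * θ : ℝ) : ℂ) * Complex.I) := exp_add_pi _
    have hanti : T j = -T k := by
      rw [hT]
      show c j * a ^ j = -(c k * a ^ k)
      rw [ha, polar_pow, polar_pow, hexp]
      rw [habspow j hcj, habspow k hck, hμjk]
      ring
    -- conclude
    refine ⟨a, heta, ?_⟩
    show (0 : ℂ) ∈ hsum TCadd 0 ((List.range (n + 1)).map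
      fun i => (c i) * hpow (· * ·) 1 a i)
    have hmapeq : ((List.range (n + 1)).map fun i => (c i) * hpow (· * ·) 1 a i) =
        (List.range (n + 1)).map T := by
      apply List.map_congr_left
      intro i _
      rw [hpow_eq_pow, hT]
    rw [hmapeq]
    exact TC_disc_subset (n + 1) T j k hjk hkn hanti hbound 0
      (by rw [norm_zero]; exact norm_nonneg _)
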